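/- Let σ: ℂ² × ℂ* → ℂ² × ℂ* be given by σ(x, y, ξ) = (X₀·conj(yξ), Y₀·conj(xξ), 1/conj(ξ)) for nonzero constants X₀, Y₀ ∈ ℂ. Then σ is an involution (σ ∘ σ = id) if and only if X₀·conj(Y₀) = 1. -/

import Mathlib

open ComplexConjugate

/-- The map `σ(x,y,ξ) = (X₀·conj(yξ), Y₀·conj(xξ), 1/conj(ξ))` on `ℂ² × ℂ*`. -/
noncomputable def involutionMap (X₀ Y₀ : ℂ) (p : ℂ × ℂ × ℂ) : ℂ × ℂ × ℂ :=
  (X₀ * conj (p.2.1 * p.2.2), Y₀ * conj (p.1 * p.2.2), (conj p.2.2)⁻¹)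

/-- `σ` is an involution on `ℂ² × ℂ*` if and only if `X₀·conj(Y₀) = 1`. -/
theorem involution_iff (X₀ Y₀ : ℂ) (hX : X₀ ≠ 0) (hY : Y₀ ≠ 0) :
    (∀ p : ℂ × ℂ × ℂ, p.2.2 ≠ 0 → involutionMap X₀ Y₀ (involutionMap X₀ Y₀ p) = p) ↔
      X₀ * conj Y₀ = 1 := by
  constructor
  · intro h
    have := h (1, 1, 1) one_ne_zero
    have h1 := congrArg Prod.fst this
    simpa [involutionMap] using h1
  · intro h p hp
    obtain ⟨x, y, ξ⟩ := p
    have hξ : ξ ≠ 0 := hp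
    have h2 : conj X₀ * Y₀ = 1 := by
      have := congrArg conj h
      simpa [mul_comm] using this
    simp only [involutionMap, map_mul, map_inv₀, Complex.conj_conj]
    refine Prod.ext ?_ (Prod.ext ?_ ?_)
    · field_simp
      linear_combination x * h
    · field_simp
      linear_combination y * h2
    · simp
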